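/- For r ≤ L, the number of arrays Y ∈ F₂^{n×L} with ρ_TE(X,Y) ≤ r (for any fixed X) equals 1 + Σ_{k=1}^r Σ_{i=1}^k C(n,i)·C(k-1,i-1)·2^{k-i}; in particular this value does not depend on X. -/

import Mathlib

open Finset

/-- Row-wise tail-erasure distance: 0 if rows equal, else `L - (least differing index)`,
which equals `L - min{i : x_i ≠ y_i} + 1` in 1-indexed notation. -/
def rhoRow {L : ℕ} (x y : Fin L → ZMod 2) : ℕ :=
  if h : x = y then 0
  else
    L - (Finset.univ.filter (fun j => x j ≠ y j)).min' (by
      obtain ⟨j, hj⟩ := Function.ne_iff.mp h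
      exact ⟨j, Finset.mem_filter.mpr ⟨Finset.mem_univ j, hj⟩⟩)

lemma zmod2_add_eq_zero (a b : ZMod 2) : a + b = 0 ↔ a = b := by revert a b; decide
lemma zmod2_ne_zero (a : ZMod 2) : a ≠ 0 ↔ a = 1 := by revert a; decide

lemma min'_congr' {α : Type*} [LinearOrder α] {s t : Finset α} (hs : s.Nonempty)
    (ht : t.Nonempty) (h : s = t) : s.min' hs = t.min' ht := by subst h; rfl

lemma rhoRow_add {L : ℕ} (x y : Fin L → ZMod 2) :
    rhoRow x y = rhoRow 0 (fun j => x j + y j) := by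
  have h1 : (x = y) ↔ ((0 : Fin L → ZMod 2) = fun j => x j + y j) := by
    constructor
    · rintro rfl; funext j; simp [((zmod2_add_eq_zero (x j) (x j)).mpr rfl).symm]
    · intro h; funext j
      have := congrFun h j
      exact (zmod2_add_eq_zero (x j) (y j)).mp this.symm
  have h2 : (Finset.univ.filter (fun j => x j ≠ y j)) =
      (Finset.univ.filter (fun j => (0 : Fin L → ZMod 2) j ≠ (fun j => x j + y j) j)) := by
    apply Finset.filter_congr
    intro j _
    simp only [Pi.zero_apply, ne_eq, eq_comm (a := (0:ZMod 2))]
    rw [zmod2_add_eq_zero]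
  unfold rhoRow
  split_ifs with ha hb hb
  · rfl
  · exact absurd (h1.mp ha) hb
  · exact absurd (h1.mpr hb) ha
  · congr 1
    congr 1
    exact min'_congr' _ _ h2

lemma rhoRow_le {L : ℕ} (x y : Fin L → ZMod 2) : rhoRow x y ≤ L := by
  unfold rhoRow; split_ifs <;> omega

lemma rhoRow_zero_iff {L : ℕ} (d : Fin L → ZMod 2) : rhoRow 0 d = 0 ↔ d = 0 := by
  unfold rhoRow
  split_ifs with h
  · simp [h.symm]
  · rw [eq_comm] at h
    simp only [ne_eq]
    constructor
    · intro hc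
      exfalso
      have hlt : ((Finset.univ.filter (fun j => (0 : Fin L → ZMod 2) j ≠ d j)).min'
          (by obtain ⟨j, hj⟩ := Function.ne_iff.mp (Ne.symm h)
              exact ⟨j, Finset.mem_filter.mpr ⟨Finset.mem_univ j, hj⟩⟩) : ℕ) < L :=
        Fin.is_lt _
      omega
    · exact fun hd => absurd hd h

lemma rhoRow_eq_iff {L m : ℕ} (hm1 : 1 ≤ m) (hmL : m ≤ L) (d : Fin L → ZMod 2) :
    rhoRow 0 d = m ↔
      (d ⟨L - m, by omega⟩ = 1 ∧ ∀ j : Fin L, (j : ℕ) < L - m → d j = 0) := by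
  by_cases hd : d = 0
  · subst hd
    have h0 : rhoRow (0 : Fin L → ZMod 2) 0 = 0 := (rhoRow_zero_iff 0).mpr rfl
    rw [h0]
    simp only [Pi.zero_apply]
    constructor
    · intro h; exact absurd h (by omega)
    · rintro ⟨h, -⟩; exact absurd h (by decide)
  · have hne : ((Finset.univ.filter (fun j => (0 : Fin L → ZMod 2) j ≠ d j))).Nonempty := by
      obtain ⟨j, hj⟩ := Function.ne_iff.mp (Ne.symm hd)
      exact ⟨j, Finset.mem_filter.mpr ⟨Finset.mem_univ j, hj⟩⟩
    set S := (Finset.univ.filter (fun j => (0 : Fin L → ZMod 2) j ≠ d j)) with hS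
    have hval : rhoRow 0 d = L - (S.min' hne : ℕ) := by
      unfold rhoRow
      rw [dif_neg (fun h => hd h.symm)]
    have hmem : S.min' hne ∈ S := S.min'_mem hne
    have hmemd : d (S.min' hne) ≠ 0 := by
      have := (Finset.mem_filter.mp hmem).2
      simpa [eq_comm] using this
    have hminlt : (S.min' hne : ℕ) < L := Fin.is_lt _
    rw [hval]
    constructor
    · intro hE
      have hmin : (S.min' hne : ℕ) = L - m := by omega
      constructor
      · have : (⟨L - m, by omega⟩ : Fin L) = S.min' hne := by
          apply Fin.ext; simp [hmin]
        rw [this]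
        exact (zmod2_ne_zero _).mp hmemd
      · intro j hj
        by_contra hdj
        have hjS : j ∈ S := Finset.mem_filter.mpr ⟨Finset.mem_univ _, by simpa [eq_comm] using hdj⟩
        have := S.min'_le j hjS
        have : (S.min' hne : ℕ) ≤ (j : ℕ) := this
        omega
    · rintro ⟨h1, h2⟩
      have hmemLm : (⟨L - m, by omega⟩ : Fin L) ∈ S := by
        refine Finset.mem_filter.mpr ⟨Finset.mem_univ _, ?_⟩
        simp only [Pi.zero_apply, ne_eq]
        rw [h1]; decide
      have hle : (S.min' hne : ℕ) ≤ L - m := S.min'_le _ hmemLm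
      have hge : ¬ ((S.min' hne : ℕ) < L - m) := by
        intro hc
        exact hmemd (h2 _ hc)
      omega

lemma rowcount0 {L : ℕ} :
    (Finset.univ.filter (fun d : Fin L → ZMod 2 => rhoRow 0 d = 0)).card = 1 := by
  have : (Finset.univ.filter (fun d : Fin L → ZMod 2 => rhoRow 0 d = 0)) = {0} := by
    ext d
    simp [rhoRow_zero_iff]
  rw [this, Finset.card_singleton]

lemma rowcount {L m : ℕ} (hm1 : 1 ≤ m) (hmL : m ≤ L) :
    (Finset.univ.filter (fun d : Fin L → ZMod 2 => rhoRow 0 d = m)).card = 2 ^ (m - 1) := by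
  have hset : (Finset.univ.filter (fun d : Fin L → ZMod 2 => rhoRow 0 d = m)) =
      Fintype.piFinset (fun j : Fin L => if (j:ℕ) < L - m then {0}
        else if (j:ℕ) = L - m then ({1} : Finset (ZMod 2)) else Finset.univ) := by
    ext d
    simp only [Finset.mem_filter, Finset.mem_univ, true_and, Fintype.mem_piFinset]
    rw [rhoRow_eq_iff hm1 hmL]
    constructor
    · rintro ⟨h1, h2⟩ j
      by_cases hj1 : (j:ℕ) < L - m
      · simp [hj1, h2 j hj1]
      · by_cases hj2 : (j:ℕ) = L - m
        · have hje : j = ⟨L - m, by omega⟩ := Fin.ext hj2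
          simp [hj1, hj2, hje, h1]
        · simp [hj1, hj2]
    · intro h
      constructor
      · have := h ⟨L - m, by omega⟩
        simpa using this
      · intro j hj
        have := h j
        simpa [hj] using this
  rw [hset, Fintype.card_piFinset]
  have hcard : ∀ j : Fin L,
      ((if (j:ℕ) < L - m then {0}
        else if (j:ℕ) = L - m then ({1} : Finset (ZMod 2)) else Finset.univ)).card =
      (if (j:ℕ) ≤ L - m then 1 else 2) := by
    intro j
    split_ifs with h1 h2 h3 h4 <;> simp_all <;> omega
  rw [Finset.prod_congr rfl (fun j _ => hcard j)]
  rw [Fin.prod_univ_eq_prod_range (fun j => if j ≤ L - m then 1 else 2) L]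
  rw [Finset.prod_ite]
  simp only [Finset.prod_const]
  have hfil : (Finset.range L).filter (fun j => ¬ j ≤ L - m) = Finset.Ico (L - m + 1) L := by
    ext j
    simp only [Finset.mem_filter, Finset.mem_range, Finset.mem_Ico]
    omega
  rw [hfil, Nat.card_Ico]
  have : L - (L - m + 1) = m - 1 := by omega
  rw [this, one_pow, one_mul]

def teW (m : ℕ) : ℕ := if m = 0 then 1 else 2 ^ (m - 1)

def teA : ℕ → ℕ → ℕ
  | 0, k => if k = 0 then 1 else 0
  | n+1, k => ∑ m ∈ Finset.range (k+1), teW m * teA n (k - m)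

lemma A_zero (n : ℕ) : teA n 0 = 1 := by
  induction n with
  | zero => rfl
  | succ n ih => simp [teA, ih, teW]

lemma sum_finAntidiagonal_succ {M : Type*} [AddCommMonoid M] (n k : ℕ)
    (f : (Fin (n+1) → ℕ) → M) :
    ∑ g ∈ finAntidiagonal (n+1) k, f g
      = ∑ m ∈ range (k+1), ∑ h ∈ finAntidiagonal n (k - m), f (Fin.cons m h) := by
  rw [Finset.sum_sigma' (range (k+1)) (fun m => finAntidiagonal n (k - m))
    (fun m h => f (Fin.cons m h))]
  refine Finset.sum_nbij' (fun g => ⟨g 0, Fin.tail g⟩) (fun p => Fin.cons p.1 p.2)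
    ?_ ?_ ?_ ?_ ?_
  · intro g hg
    rw [mem_finAntidiagonal] at hg
    rw [Fin.sum_univ_succ] at hg
    refine Finset.mem_sigma.mpr ⟨?_, ?_⟩
    · simp only [mem_range]
      omega
    · simp only [mem_finAntidiagonal]
      show ∑ i : Fin n, g i.succ = k - g 0
      omega
  · rintro ⟨m, h⟩ hp
    rw [Finset.mem_sigma, mem_range, mem_finAntidiagonal] at hp
    dsimp only at hp ⊢
    rw [mem_finAntidiagonal, Fin.sum_univ_succ]
    simp only [Fin.cons_zero, Fin.cons_succ]
    omega
  · intro g _; exact Fin.cons_self_tail g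
  · rintro ⟨m, h⟩ _
    simp [Fin.tail_cons]
  · intro g _
    rw [Fin.cons_self_tail]

lemma sum_prod_w (n k : ℕ) :
    ∑ g ∈ finAntidiagonal n k, ∏ i, teW (g i) = teA n k := by
  induction n generalizing k with
  | zero =>
    cases k with
    | zero =>
      have h : finAntidiagonal 0 (0:ℕ) = {![]} := by
        ext g
        simp [mem_finAntidiagonal, Subsingleton.elim g ![]]
      rw [h]; simp [teA]
    | succ k =>
      have h : finAntidiagonal 0 (k+1 : ℕ) = ∅ := by
        ext g
        simp [mem_finAntidiagonal]
      rw [h]; simp [teA]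
  | succ n ih =>
    rw [sum_finAntidiagonal_succ]
    show _ = ∑ m ∈ range (k+1), teW m * teA n (k - m)
    refine Finset.sum_congr rfl fun m _ => ?_
    rw [← ih (k - m), Finset.mul_sum]
    refine Finset.sum_congr rfl fun h _ => ?_
    rw [Fin.prod_univ_succ]
    simp [Fin.cons_zero, Fin.cons_succ]

lemma A_formula (n : ℕ) : ∀ k, 1 ≤ k →
    teA n k = ∑ i ∈ Icc 1 k, n.choose i * (k-1).choose (i-1) * 2^(k-i) := by
  induction n with
  | zero =>
    intro k hk
    show (if k = 0 then 1 else 0) = _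
    rw [if_neg (by omega)]
    symm
    refine Finset.sum_eq_zero fun i hi => ?_
    rw [mem_Icc] at hi
    rw [Nat.choose_eq_zero_of_lt (by omega), zero_mul, zero_mul]
  | succ n ih =>
    intro k hk
    show (∑ m ∈ range (k+1), teW m * teA n (k - m)) = _
    have hrange : range (k+1) = insert 0 (Icc 1 k) := by
      ext m; simp only [mem_range, mem_insert, mem_Icc]; omega
    have h0notin : (0:ℕ) ∉ Icc 1 k := by simp
    rw [hrange, Finset.sum_insert h0notin]
    have h0 : teW 0 * teA n (k - 0) = teA n k := by simp [teW]
    rw [h0]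
    have hIcc : Icc 1 k = insert k (Icc 1 (k-1)) := by
      ext m; simp only [mem_insert, mem_Icc]; omega
    have hknotin : k ∉ Icc 1 (k-1) := by simp only [mem_Icc]; omega
    rw [hIcc, Finset.sum_insert hknotin]
    have hkterm : teW k * teA n (k - k) = 2^(k-1) := by
      rw [Nat.sub_self, A_zero, mul_one]
      simp only [teW, if_neg (by omega : ¬ k = 0)]
    rw [hkterm]
    -- main sum T
    have hT : ∑ m ∈ Icc 1 (k-1), teW m * teA n (k - m)
        = ∑ i ∈ Icc 1 (k-1), n.choose i * (k-1).choose i * 2^(k-1-i) := by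
      have step1 : ∑ m ∈ Icc 1 (k-1), teW m * teA n (k - m)
          = ∑ m ∈ Icc 1 (k-1), ∑ i ∈ Icc 1 (k-1),
              n.choose i * (k-m-1).choose (i-1) * 2^(k-1-i) := by
        refine Finset.sum_congr rfl fun m hm => ?_
        rw [mem_Icc] at hm
        rw [show teW m = 2^(m-1) from if_neg (by omega), ih (k - m) (by omega), Finset.mul_sum]
        have step1a : ∑ i ∈ Icc 1 (k-m), 2^(m-1) * (n.choose i * (k-m-1).choose (i-1) * 2^(k-m-i))
            = ∑ i ∈ Icc 1 (k-m), n.choose i * (k-m-1).choose (i-1) * 2^(k-1-i) := by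
          refine Finset.sum_congr rfl fun i hi => ?_
          rw [mem_Icc] at hi
          have he : k-m-i + (m-1) = k-1-i := by omega
          calc 2^(m-1) * (n.choose i * (k-m-1).choose (i-1) * 2^(k-m-i))
              = n.choose i * (k-m-1).choose (i-1) * (2^(k-m-i) * 2^(m-1)) := by ring
            _ = n.choose i * (k-m-1).choose (i-1) * 2^(k-1-i) := by rw [← pow_add, he]
        rw [step1a]
        refine Finset.sum_subset (Finset.Icc_subset_Icc_right (by omega)) fun i hi hni => ?_
        rw [mem_Icc] at hi
        rw [mem_Icc] at hni
        rw [Nat.choose_eq_zero_of_lt (show k-m-1 < i-1 by omega), mul_zero, zero_mul]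
      rw [step1, Finset.sum_comm]
      refine Finset.sum_congr rfl fun i hi => ?_
      rw [mem_Icc] at hi
      have factor : ∀ m, n.choose i * (k-m-1).choose (i-1) * 2^(k-1-i)
          = (n.choose i * 2^(k-1-i)) * (k-m-1).choose (i-1) := fun m => by ring
      simp only [factor]
      rw [← Finset.mul_sum]
      have hhs : ∑ m ∈ Icc 1 (k-1), (k-m-1).choose (i-1) = (k-1).choose i := by
        have hre : ∑ m ∈ Icc 1 (k-1), (k-m-1).choose (i-1)
            = ∑ j ∈ Icc 0 (k-2), j.choose (i-1) := by
          refine Finset.sum_nbij' (fun m => k-1-m) (fun j => k-1-j) ?_ ?_ ?_ ?_ ?_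
          · intro m hm; simp only [mem_Icc] at hm ⊢; omega
          · intro j hj; simp only [mem_Icc] at hj ⊢; omega
          · intro m hm; simp only [mem_Icc] at hm; omega
          · intro j hj; simp only [mem_Icc] at hj; omega
          · intro m hm; simp only [mem_Icc] at hm; congr 1; omega
        rw [hre]
        have hre2 : ∑ j ∈ Icc 0 (k-2), j.choose (i-1)
            = ∑ j ∈ Icc (i-1) (k-2), j.choose (i-1) := by
          symm
          refine Finset.sum_subset (Finset.Icc_subset_Icc_left (by omega)) fun j hj hnj => ?_
          rw [mem_Icc] at hj
          rw [mem_Icc] at hnj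
          exact Nat.choose_eq_zero_of_lt (by omega)
        rw [hre2, Nat.sum_Icc_choose]
        congr 1 <;> omega
      rw [hhs]
      ring
    rw [hT]
    -- now the RHS
    have hRHS : ∑ i ∈ Icc 1 k, (n+1).choose i * (k-1).choose (i-1) * 2^(k-i)
        = (∑ i ∈ Icc 1 k, n.choose i * (k-1).choose (i-1) * 2^(k-i))
          + ∑ i ∈ Icc 1 k, n.choose (i-1) * (k-1).choose (i-1) * 2^(k-i) := by
      rw [← Finset.sum_add_distrib]
      refine Finset.sum_congr rfl fun i hi => ?_
      rw [mem_Icc] at hi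
      have : (n+1).choose i = n.choose i + n.choose (i-1) := by
        obtain ⟨i', rfl⟩ : ∃ i', i = i'+1 := ⟨i-1, by omega⟩
        rw [Nat.choose_succ_succ' n i']
        simp only [Nat.add_sub_cancel]
        omega
      rw [this]
      ring
    rw [← hIcc, hRHS, ← ih k hk]
    have hR2 : ∑ i ∈ Icc 1 k, n.choose (i-1) * (k-1).choose (i-1) * 2^(k-i)
        = ∑ j ∈ Icc 0 (k-1), n.choose j * (k-1).choose j * 2^(k-1-j) := by
      refine Finset.sum_nbij' (fun i => i-1) (fun j => j+1) ?_ ?_ ?_ ?_ ?_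
      · intro i hi; simp only [mem_Icc] at hi ⊢; omega
      · intro j hj; simp only [mem_Icc] at hj ⊢; omega
      · intro i hi; simp only [mem_Icc] at hi; omega
      · intro j hj; simp only [mem_Icc] at hj; omega
      · intro i hi; simp only [mem_Icc] at hi
        have he2 : k - 1 - (i - 1) = k - i := by omega
        rw [he2]
    rw [hR2]
    have hsplit : Icc 0 (k-1) = insert 0 (Icc 1 (k-1)) := by
      ext m; simp only [mem_insert, mem_Icc]; omega
    rw [hsplit, Finset.sum_insert (by simp)]
    simp only [Nat.choose_zero_right, one_mul, Nat.sub_zero]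

/-- The tail-erasure distance on binary `n × L` arrays: sum of row distances. -/
def rhoTE {n L : ℕ} (X Y : Fin n → Fin L → ZMod 2) : ℕ :=
  ∑ i, rhoRow (X i) (Y i)

lemma rhoTE_eq {n L : ℕ} (X Y : Fin n → Fin L → ZMod 2) :
    rhoTE X Y = rhoTE 0 (fun i j => X i j + Y i j) := by
  unfold rhoTE
  refine Finset.sum_congr rfl fun i _ => ?_
  exact rhoRow_add (X i) (Y i)

/-- for `r ≤ L`, the ρ_TE-ball of radius `r` around any `X` has size
`1 + Σ_{k=1}^r Σ_{i=1}^k C(n,i)·C(k-1,i-1)·2^{k-i}`; in particular it does not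
depend on the center `X`. -/
theorem stmt_9 (n L r : ℕ) (hn : 0 < n) (hL : 0 < L) (hr : 0 < r) (hrL : r ≤ L)
    (X : Fin n → Fin L → ZMod 2) :
    Nat.card {Y : Fin n → Fin L → ZMod 2 | rhoTE X Y ≤ r} =
      1 + ∑ k ∈ Finset.Icc 1 r, ∑ i ∈ Finset.Icc 1 k,
        n.choose i * (k - 1).choose (i - 1) * 2 ^ (k - i) := by
  classical
  have h1 : Nat.card {Y : Fin n → Fin L → ZMod 2 | rhoTE X Y ≤ r}
      = (Finset.univ.filter (fun Y : Fin n → Fin L → ZMod 2 => rhoTE X Y ≤ r)).card := by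
    rw [Nat.card_eq_fintype_card]
    convert Fintype.card_subtype (fun Y : Fin n → Fin L → ZMod 2 => rhoTE X Y ≤ r)
    exact Iff.rfl
  rw [h1]
  -- translation to center 0
  have h2 : (Finset.univ.filter (fun Y : Fin n → Fin L → ZMod 2 => rhoTE X Y ≤ r)).card
      = (Finset.univ.filter (fun D : Fin n → Fin L → ZMod 2 => rhoTE 0 D ≤ r)).card := by
    have hinv : ∀ a c : ZMod 2, a + (a + c) = c := by decide
    refine Finset.card_nbij' (fun Y => fun i j => X i j + Y i j)
      (fun D => fun i j => X i j + D i j) ?_ ?_ ?_ ?_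
    · intro Y hY
      rw [Finset.mem_coe, Finset.mem_filter] at hY ⊢
      exact ⟨Finset.mem_univ _, by rw [← rhoTE_eq]; exact hY.2⟩
    · intro D hD
      rw [Finset.mem_coe, Finset.mem_filter] at hD ⊢
      refine ⟨Finset.mem_univ _, ?_⟩
      have : rhoTE 0 D = rhoTE X (fun i j => X i j + D i j) := by
        rw [rhoTE_eq X]
        congr 1
        funext i j
        exact (hinv (X i j) (D i j)).symm
      rw [← this]
      exact hD.2
    · intro Y _
      funext i j
      exact hinv _ _
    · intro D _
      funext i j
      exact hinv _ _
  rw [h2]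
  -- fiberwise over row profiles
  set T := (Fintype.piFinset fun _ : Fin n => Finset.range (L+1)).filter
    (fun g : Fin n → ℕ => ∑ i, g i ≤ r) with hTdef
  clear_value T
  have hrho : ∀ D : Fin n → Fin L → ZMod 2, rhoTE 0 D = ∑ i, rhoRow 0 (D i) := fun D => rfl
  have h3 : (Finset.univ.filter (fun D : Fin n → Fin L → ZMod 2 => rhoTE 0 D ≤ r)).card
      = ∑ g ∈ T, ∏ i, teW (g i) := by
    rw [Finset.card_eq_sum_card_fiberwise
      (f := fun D : Fin n → Fin L → ZMod 2 => fun i => rhoRow 0 (D i)) (t := T)]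
    · refine Finset.sum_congr rfl fun g hg => ?_
      rw [hTdef, Finset.mem_filter, Fintype.mem_piFinset] at hg
      have hfib : ((Finset.univ.filter (fun D : Fin n → Fin L → ZMod 2 => rhoTE 0 D ≤ r)).filter
          (fun D => (fun i => rhoRow 0 (D i)) = g))
          = Fintype.piFinset (fun i => Finset.univ.filter (fun d : Fin L → ZMod 2 =>
              rhoRow 0 d = g i)) := by
        ext D
        simp only [Finset.mem_filter, Finset.mem_univ, true_and, Fintype.mem_piFinset,
          funext_iff]
        constructor
        · rintro ⟨-, h⟩; exact h
        · intro h
          refine ⟨?_, h⟩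
          rw [hrho D]
          calc ∑ i, rhoRow 0 (D i) = ∑ i, g i := Finset.sum_congr rfl fun i _ => h i
            _ ≤ r := hg.2
      rw [hfib, Fintype.card_piFinset]
      refine Finset.prod_congr rfl fun i _ => ?_
      have hgi : g i ≤ L := by
        have := hg.1 i
        rw [Finset.mem_range] at this
        omega
      rcases Nat.eq_zero_or_pos (g i) with h0 | hpos
      · rw [h0, rowcount0]; simp [teW]
      · rw [rowcount hpos hgi]
        simp only [teW, if_neg (by omega : ¬ g i = 0)]
    · intro D hD
      rw [Finset.mem_coe, Finset.mem_filter] at hD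
      rw [hTdef, Finset.mem_coe, Finset.mem_filter, Fintype.mem_piFinset]
      refine ⟨fun i => ?_, ?_⟩
      · rw [Finset.mem_range]
        have := rhoRow_le (0 : Fin L → ZMod 2) (D i)
        dsimp only
        omega
      · rw [← hrho D]; exact hD.2
  rw [h3]
  -- split by total
  have h4 : ∑ g ∈ T, ∏ i, teW (g i)
      = ∑ k ∈ Finset.range (r+1), ∑ g ∈ T.filter (fun g => ∑ i, g i = k), ∏ i, teW (g i) := by
    symm
    refine Finset.sum_fiberwise_of_maps_to (fun g hg => ?_) _
    simp only [hTdef, Finset.mem_filter] at hg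
    exact Finset.mem_range.mpr (Nat.lt_succ_of_le hg.2)
  rw [h4]
  clear h1 h2 h3 h4
  have h5 : ∀ k ∈ Finset.range (r+1),
      T.filter (fun g => ∑ i, g i = k) = Finset.finAntidiagonal n k := by
    intro k hk
    rw [Finset.mem_range] at hk
    ext g
    simp only [hTdef, Finset.mem_filter, Fintype.mem_piFinset,
      Finset.mem_finAntidiagonal, Finset.mem_range]
    constructor
    · rintro ⟨-, h⟩; exact h
    · intro h
      have hle : ∑ i, g i ≤ r := by omega
      refine ⟨⟨fun i => ?_, hle⟩, h⟩
      have hgile : g i ≤ ∑ j, g j := Finset.single_le_sum (fun j _ => Nat.zero_le _) (Finset.mem_univ i)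
      omega
  have h6 : ∑ k ∈ Finset.range (r+1), ∑ g ∈ T.filter (fun g => ∑ i, g i = k), ∏ i, teW (g i)
      = ∑ k ∈ Finset.range (r+1), teA n k := by
    refine Finset.sum_congr rfl fun k hk => ?_
    rw [h5 k hk, sum_prod_w]
  rw [h6]
  clear h5 h6
  have hrange : Finset.range (r+1) = insert 0 (Finset.Icc 1 r) := by
    ext m; simp only [Finset.mem_range, Finset.mem_insert, Finset.mem_Icc]; omega
  rw [hrange, Finset.sum_insert (by simp), A_zero]
  congr 1
  refine Finset.sum_congr rfl fun k hk => ?_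
  rw [Finset.mem_Icc] at hk
  exact A_formula n k hk.1
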